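/- Let ε > 0 and let ≽ be a preference on the simplex Δ ⊆ ℝ^{d+1} that is a continuous weak order satisfying Extremality (there are degenerate lotteries p̄ and p̲ with p̄ ≽ p ≽ p̲ for every p ∈ Δ) and Monotonicity (λ > λ' in [0,1] implies λp̄+(1−λ)p̲ ≻ λ'p̄+(1−λ')p̲). Suppose u, ℓ : Δ → [0,1] are such that u represents ≽, u(Δ) = ℓ(Δ) = [0,1], ℓ is affine, u agrees with ℓ on all degenerate lotteries, and sup_{p∈Δ}|u(p)−ℓ(p)| < ε. Then ≽ satisfies 4ε-Reduction of compound lotteries: whenever p₀ ∼ α₀p̄+(1−α₀)p̲, p₁ ∼ α₁p̄+(1−α₁)p̲ and λp₀+(1−λ)p₁ ∼ αp̄+(1−α)p̲ for λ ∈ [0,1], one has |α − (λα₀+(1−λ)α₁)| < 4ε. -/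
import Mathlib


/-- Theorem `thm:EU`, converse part: if a continuous weak order on the
simplex satisfies Extremality and Monotonicity, and admits `u, ℓ : Δ → [0,1]` with `u`
representing `≽`, `ℓ` affine, `u` and `ℓ` agreeing on degenerate lotteries, onto `[0,1]`,
and `sup |u - ℓ| < ε`, then `≽` satisfies 4ε-Reduction of compound lotteries. -/
theorem stmt_1 (d : ℕ) (hd : 1 ≤ d) (ε : ℝ) (hε : 0 < ε)
    (R : (Fin (d + 1) → ℝ) → (Fin (d + 1) → ℝ) → Prop)
    (Δ : Set (Fin (d + 1) → ℝ)) (hΔ : Δ = stdSimplex ℝ (Fin (d + 1)))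
    (hcomp : ∀ p ∈ Δ, ∀ q ∈ Δ, R p q ∨ R q p)
    (htrans : ∀ p ∈ Δ, ∀ q ∈ Δ, ∀ r ∈ Δ, R p q → R q r → R p r)
    (hcont : ∀ p ∈ Δ, IsClosed {q | q ∈ Δ ∧ R q p} ∧ IsClosed {q | q ∈ Δ ∧ R p q})
    (i₀ i₁ : Fin (d + 1)) (pbar punder : Fin (d + 1) → ℝ)
    (hpbar : pbar = Pi.single i₀ 1) (hpunder : punder = Pi.single i₁ 1)
    (hext : ∀ p ∈ Δ, R pbar p ∧ R p punder)
    (hmono : ∀ l l' : ℝ, l ∈ Set.Icc (0 : ℝ) 1 → l' ∈ Set.Icc (0 : ℝ) 1 → l' < l →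
      R (l • pbar + (1 - l) • punder) (l' • pbar + (1 - l') • punder) ∧
      ¬ R (l' • pbar + (1 - l') • punder) (l • pbar + (1 - l) • punder))
    (u ℓ : (Fin (d + 1) → ℝ) → ℝ)
    (hrep : ∀ p ∈ Δ, ∀ q ∈ Δ, (R p q ↔ u q ≤ u p))
    (huim : u '' Δ = Set.Icc 0 1) (hlim : ℓ '' Δ = Set.Icc 0 1)
    (haff : ∀ p ∈ Δ, ∀ q ∈ Δ, ∀ t ∈ Set.Icc (0 : ℝ) 1,
      ℓ (t • p + (1 - t) • q) = t * ℓ p + (1 - t) * ℓ q)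
    (hagree : ∀ i : Fin (d + 1), u (Pi.single i 1) = ℓ (Pi.single i 1))
    (hclose : ∀ p ∈ Δ, |u p - ℓ p| < ε) :
    ∀ p₀ ∈ Δ, ∀ p₁ ∈ Δ, ∀ l α₀ α₁ α : ℝ,
      l ∈ Set.Icc (0 : ℝ) 1 → α₀ ∈ Set.Icc (0 : ℝ) 1 → α₁ ∈ Set.Icc (0 : ℝ) 1 →
      α ∈ Set.Icc (0 : ℝ) 1 →
      (R p₀ (α₀ • pbar + (1 - α₀) • punder) ∧ R (α₀ • pbar + (1 - α₀) • punder) p₀) →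
      (R p₁ (α₁ • pbar + (1 - α₁) • punder) ∧ R (α₁ • pbar + (1 - α₁) • punder) p₁) →
      (R (l • p₀ + (1 - l) • p₁) (α • pbar + (1 - α) • punder) ∧
        R (α • pbar + (1 - α) • punder) (l • p₀ + (1 - l) • p₁)) →
      |α - (l * α₀ + (1 - l) * α₁)| < 4 * ε := by
  intro p₀ hp₀ p₁ hp₁ l α₀ α₁ α hl hα₀ hα₁ hα h0 h1 hm
  subst hΔ
  set S := stdSimplex ℝ (Fin (d + 1)) with hS
  have hpb : pbar ∈ S := hpbar ▸ single_mem_stdSimplex ℝ i₀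
  have hpu : punder ∈ S := hpunder ▸ single_mem_stdSimplex ℝ i₁
  have hmix : ∀ (t : ℝ), ∀ p ∈ S, ∀ q ∈ S, t ∈ Set.Icc (0:ℝ) 1 → t • p + (1 - t) • q ∈ S := by
    intro t p hp q hq ht
    exact (convex_stdSimplex ℝ (Fin (d+1))) hp hq ht.1 (by linarith [ht.2]) (by ring)
  -- u pbar = 1, u punder = 0
  have hub : u pbar ∈ Set.Icc (0:ℝ) 1 := huim ▸ Set.mem_image_of_mem u hpb
  have huu : u punder ∈ Set.Icc (0:ℝ) 1 := huim ▸ Set.mem_image_of_mem u hpu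
  have h1mem : (1:ℝ) ∈ u '' S := by rw [huim]; exact ⟨le_of_lt one_pos, le_refl 1⟩
  have h0mem : (0:ℝ) ∈ u '' S := by rw [huim]; exact ⟨le_refl 0, le_of_lt one_pos⟩
  obtain ⟨pt, hpt, hupt⟩ := h1mem
  obtain ⟨pz, hpz, hupz⟩ := h0mem
  have hub1 : u pbar = 1 := by
    have := (hrep pbar hpb pt hpt).mp (hext pt hpt).1
    have := hub.2; linarith [hupt ▸ ‹u pt ≤ u pbar›]
  have huu0 : u punder = 0 := by
    have := (hrep pz hpz punder hpu).mp (hext pz hpz).2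
    have := huu.1; linarith [hupz ▸ ‹u punder ≤ u pz›]
  have hlb1 : ℓ pbar = 1 := by rw [hpbar, ← hagree, ← hpbar, hub1]
  have hlu0 : ℓ punder = 0 := by rw [hpunder, ← hagree, ← hpunder, huu0]
  -- lmix value
  have hlmix : ∀ t ∈ Set.Icc (0:ℝ) 1, ℓ (t • pbar + (1 - t) • punder) = t := by
    intro t ht
    rw [haff pbar hpb punder hpu t ht, hlb1, hlu0]; ring
  -- general sim fact: if p ∼ mix t then |u p - t| < ε
  have key : ∀ p ∈ S, ∀ t ∈ Set.Icc (0:ℝ) 1,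
      (R p (t • pbar + (1 - t) • punder) ∧ R (t • pbar + (1 - t) • punder) p) →
      |u p - t| < ε := by
    intro p hp t ht hRt
    have hmS : t • pbar + (1 - t) • punder ∈ S := hmix t pbar hpb punder hpu ht
    have he1 : u (t • pbar + (1 - t) • punder) ≤ u p := (hrep p hp _ hmS).mp hRt.1
    have he2 : u p ≤ u (t • pbar + (1 - t) • punder) := (hrep _ hmS p hp).mp hRt.2
    have heq : u p = u (t • pbar + (1 - t) • punder) := le_antisymm he2 he1
    have := hclose _ hmS
    rw [hlmix t ht] at this
    rw [heq]; exact this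
  have k0 : |u p₀ - α₀| < ε := key p₀ hp₀ α₀ hα₀ h0
  have k1 : |u p₁ - α₁| < ε := key p₁ hp₁ α₁ hα₁ h1
  have hq : l • p₀ + (1 - l) • p₁ ∈ S := hmix l p₀ hp₀ p₁ hp₁ hl
  have kq : |u (l • p₀ + (1 - l) • p₁) - α| < ε := key _ hq α hα hm
  have c0 : |u p₀ - ℓ p₀| < ε := hclose p₀ hp₀
  have c1 : |u p₁ - ℓ p₁| < ε := hclose p₁ hp₁
  have cq : |u (l • p₀ + (1 - l) • p₁) - ℓ (l • p₀ + (1 - l) • p₁)| < ε := hclose _ hq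
  have hlmx : ℓ (l • p₀ + (1 - l) • p₁) = l * ℓ p₀ + (1 - l) * ℓ p₁ := haff p₀ hp₀ p₁ hp₁ l hl
  rw [abs_lt] at k0 k1 kq c0 c1 cq ⊢
  have b0u : l * (ℓ p₀ - α₀) ≤ l * (2 * ε) :=
    mul_le_mul_of_nonneg_left (by linarith [k0.1, k0.2, c0.1, c0.2]) hl.1
  have b0l : l * (-(2 * ε)) ≤ l * (ℓ p₀ - α₀) :=
    mul_le_mul_of_nonneg_left (by linarith [k0.1, k0.2, c0.1, c0.2]) hl.1
  have b1u : (1 - l) * (ℓ p₁ - α₁) ≤ (1 - l) * (2 * ε) :=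
    mul_le_mul_of_nonneg_left (by linarith [k1.1, k1.2, c1.1, c1.2]) (by linarith [hl.2])
  have b1l : (1 - l) * (-(2 * ε)) ≤ (1 - l) * (ℓ p₁ - α₁) :=
    mul_le_mul_of_nonneg_left (by linarith [k1.1, k1.2, c1.1, c1.2]) (by linarith [hl.2])
  constructor <;> nlinarith [kq.1, kq.2, cq.1, cq.2, hlmx, b0u, b0l, b1u, b1l]
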